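/- Let n, r, r₁ : [0,∞) → [0,∞) satisfy n(t) ≤ C₁·exp(d_tan·t), r(t) ≤ C₂·exp(-d_tr·t), and r₁(t) ≤ C₂·exp(-d_tr·t), with 0 < d_tan < d_tr. Then the quantity E(t) = (n(t)/(1 - n(t)·r(t)))·(r(t)·M + r₁(t)), defined whenever n(t)·r(t) < 1, satisfies: there exist t₀ ≥ 0 and C > 0 such that for all t ≥ t₀, n(t)·r(t) < 1/2 and E(t) ≤ C·exp((d_tan - d_tr)·t); in particular E(t) → 0 as t → ∞. -/

import Mathlib

/-- Exponential convergence at rate d_tr - d_tan of the error bound (4.13)-(4.16). -/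
theorem stmt3 (n r r₁ : ℝ → ℝ) (C₁ C₂ dtan dtr M : ℝ)
    (hC₁ : 0 < C₁) (hC₂ : 0 < C₂) (hdtan : 0 < dtan) (hsep : dtan < dtr) (hM : 0 < M)
    (hn0 : ∀ t ≥ (0:ℝ), 0 ≤ n t) (hr0 : ∀ t ≥ (0:ℝ), 0 ≤ r t)
    (hr₁0 : ∀ t ≥ (0:ℝ), 0 ≤ r₁ t)
    (hn : ∀ t ≥ (0:ℝ), n t ≤ C₁ * Real.exp (dtan * t))
    (hr : ∀ t ≥ (0:ℝ), r t ≤ C₂ * Real.exp (-dtr * t))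
    (hr₁ : ∀ t ≥ (0:ℝ), r₁ t ≤ C₂ * Real.exp (-dtr * t)) :
    ∃ t₀ ≥ (0:ℝ), ∃ C > (0:ℝ),
      (∀ t ≥ t₀, n t * r t < 1 / 2 ∧
        (n t / (1 - n t * r t)) * (r t * M + r₁ t) ≤ C * Real.exp ((dtan - dtr) * t)) ∧
      Filter.Tendsto (fun t => (n t / (1 - n t * r t)) * (r t * M + r₁ t))
        Filter.atTop (nhds 0) := by
  have hneg : dtan - dtr < 0 := by linarith
  set t₀ : ℝ := max 0 (Real.log (4 * C₁ * C₂) / (dtr - dtan)) with ht₀def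
  have ht₀0 : (0:ℝ) ≤ t₀ := le_max_left _ _
  have hCC : (0:ℝ) < 4 * C₁ * C₂ := by positivity
  -- key smallness: for t ≥ t₀, C₁C₂ exp((dtan-dtr)t) ≤ 1/4
  have key : ∀ t ≥ t₀, C₁ * C₂ * Real.exp ((dtan - dtr) * t) ≤ 1 / 4 := by
    intro t ht
    have h1 : Real.log (4 * C₁ * C₂) / (dtr - dtan) ≤ t := le_trans (le_max_right _ _) ht
    have h2 : Real.log (4 * C₁ * C₂) ≤ (dtr - dtan) * t := by
      have := (div_le_iff₀ (by linarith : (0:ℝ) < dtr - dtan)).mp h1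
      linarith [this]
    have h3 : Real.exp ((dtan - dtr) * t) ≤ (4 * C₁ * C₂)⁻¹ := by
      rw [← Real.exp_log (show (0:ℝ) < (4 * C₁ * C₂)⁻¹ by positivity)]
      apply Real.exp_le_exp.mpr
      rw [Real.log_inv]
      linarith
    calc C₁ * C₂ * Real.exp ((dtan - dtr) * t) ≤ C₁ * C₂ * (4 * C₁ * C₂)⁻¹ := by
          apply mul_le_mul_of_nonneg_left h3 (by positivity)
      _ = 1 / 4 := by field_simp
  -- bound on n t * r t
  have hnr : ∀ t ≥ t₀, n t * r t ≤ C₁ * C₂ * Real.exp ((dtan - dtr) * t) := by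
    intro t ht
    have ht0 : (0:ℝ) ≤ t := le_trans ht₀0 ht
    have := mul_le_mul (hn t ht0) (hr t ht0) (hr0 t ht0) (by positivity)
    calc n t * r t ≤ C₁ * Real.exp (dtan * t) * (C₂ * Real.exp (-dtr * t)) := this
      _ = C₁ * C₂ * Real.exp ((dtan - dtr) * t) := by
          rw [show (dtan - dtr)*t = dtan*t + -dtr*t by ring, Real.exp_add]; ring
  refine ⟨t₀, ht₀0, 2 * C₁ * C₂ * (M + 1), by positivity, ?_⟩
  have main : ∀ t ≥ t₀, n t * r t < 1 / 2 ∧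
      (n t / (1 - n t * r t)) * (r t * M + r₁ t) ≤
        2 * C₁ * C₂ * (M + 1) * Real.exp ((dtan - dtr) * t) := by
    intro t ht
    have ht0 : (0:ℝ) ≤ t := le_trans ht₀0 ht
    have hsmall : n t * r t ≤ 1 / 4 := le_trans (hnr t ht) (key t ht)
    have h12 : n t * r t < 1 / 2 := by linarith
    have hden : (1:ℝ)/2 ≤ 1 - n t * r t := by linarith
    refine ⟨h12, ?_⟩
    have hquot : n t / (1 - n t * r t) ≤ 2 * n t := by
      have := div_le_div_of_nonneg_left (hn0 t ht0) (by norm_num : (0:ℝ) < 1/2) hden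
      calc n t / (1 - n t * r t) ≤ n t / (1/2) := this
        _ = 2 * n t := by ring
    have hsum : r t * M + r₁ t ≤ C₂ * (M + 1) * Real.exp (-dtr * t) := by
      have h1 := mul_le_mul_of_nonneg_right (hr t ht0) hM.le
      have h2 := hr₁ t ht0
      nlinarith [Real.exp_pos (-dtr * t)]
    have hsumpos : 0 ≤ r t * M + r₁ t := by
      have := hr0 t ht0; have := hr₁0 t ht0; nlinarith
    have hq0 : 0 ≤ n t / (1 - n t * r t) :=
      div_nonneg (hn0 t ht0) (by linarith)
    calc (n t / (1 - n t * r t)) * (r t * M + r₁ t)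
        ≤ 2 * n t * (C₂ * (M + 1) * Real.exp (-dtr * t)) := by
          apply mul_le_mul hquot hsum hsumpos
          nlinarith [hn0 t ht0]
      _ ≤ 2 * (C₁ * Real.exp (dtan * t)) * (C₂ * (M + 1) * Real.exp (-dtr * t)) := by
          have := hn t ht0
          have hpos : (0:ℝ) < C₂ * (M + 1) * Real.exp (-dtr * t) := by positivity
          nlinarith
      _ = 2 * C₁ * C₂ * (M + 1) * Real.exp ((dtan - dtr) * t) := by
          rw [show (dtan - dtr)*t = dtan*t + -dtr*t by ring, Real.exp_add]; ring
  refine ⟨main, ?_⟩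
  -- tendsto 0 by squeeze
  have hexp : Filter.Tendsto (fun t : ℝ => 2 * C₁ * C₂ * (M + 1) * Real.exp ((dtan - dtr) * t))
      Filter.atTop (nhds 0) := by
    have h1 : Filter.Tendsto (fun t : ℝ => (dtan - dtr) * t) Filter.atTop Filter.atBot :=
      Filter.Tendsto.const_mul_atTop_of_neg hneg Filter.tendsto_id
    have h2 := Real.tendsto_exp_atBot.comp h1
    have := h2.const_mul (2 * C₁ * C₂ * (M + 1))
    simpa using this
  apply tendsto_of_tendsto_of_tendsto_of_le_of_le' tendsto_const_nhds hexp
  · filter_upwards [Filter.eventually_ge_atTop t₀] with t ht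
    have ht0 : (0:ℝ) ≤ t := le_trans ht₀0 ht
    have hsmall : n t * r t ≤ 1 / 4 := le_trans (hnr t ht) (key t ht)
    have hq0 : 0 ≤ n t / (1 - n t * r t) :=
      div_nonneg (hn0 t ht0) (by linarith)
    have hsumpos : 0 ≤ r t * M + r₁ t := by
      have := hr0 t ht0; have := hr₁0 t ht0; nlinarith
    positivity
  · filter_upwards [Filter.eventually_ge_atTop t₀] with t ht
    exact (main t ht).2
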